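/- Let V: ℝ^n\{0} → ℝ^n be a C² vector field that is positively homogeneous of degree zero (V(cx) = V(x) for c > 0), and let φ be a flow of V (φ(0,x) = x, ∂_t φ(t,x) = V(φ(t,x))) whose trajectories stay in ℝ^n\{0}, with φ(s, x) defined for all s ∈ [0,1] and all x of sufficiently large norm. Then there exist constants C̃ > 0 and δ̃ > 0 such that for every x with |x| ≥ 1/δ̃ one has |φ(1, x) − x − V(x)| ≤ C̃ / |x|. -/

import Mathlib

abbrev Esp (m : ℕ) := EuclideanSpace ℝ (Fin (m + 1))


/-- Let `V : ℝ^n\{0} → ℝ^n` be a C² vector field which is positively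
homogeneous of degree zero, and let `φ` be a flow of `V` (`φ 0 x = x`,
`∂ₜ φ(t,x) = V (φ(t,x))`) whose trajectories stay in `ℝ^n\{0}`, with `φ s x` defined for
all `s ∈ [0,1]` and all `x` of sufficiently large norm (`‖x‖ ≥ ρ`).  Then there exist
constants `C̃ > 0` and `δ̃ > 0` such that for every `x` with `‖x‖ ≥ 1/δ̃` one has
`‖φ 1 x − x − V x‖ ≤ C̃ / ‖x‖`. -/
theorem stmt8 {n : ℕ} (V : EuclideanSpace ℝ (Fin n) → EuclideanSpace ℝ (Fin n))
    (hV : ContDiffOn ℝ 2 V {(0 : EuclideanSpace ℝ (Fin n))}ᶜ)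
    (hhom : ∀ c : ℝ, 0 < c → ∀ x : EuclideanSpace ℝ (Fin n), x ≠ 0 → V (c • x) = V x)
    (φ : ℝ → EuclideanSpace ℝ (Fin n) → EuclideanSpace ℝ (Fin n))
    (ρ : ℝ) (hρ : 0 < ρ)
    (hφ0 : ∀ x : EuclideanSpace ℝ (Fin n), ρ ≤ ‖x‖ → φ 0 x = x)
    (hφd : ∀ x : EuclideanSpace ℝ (Fin n), ρ ≤ ‖x‖ → ∀ s ∈ Set.Icc (0 : ℝ) 1,
      HasDerivAt (fun t => φ t x) (V (φ s x)) s)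
    (hφne : ∀ x : EuclideanSpace ℝ (Fin n), ρ ≤ ‖x‖ → ∀ s ∈ Set.Icc (0 : ℝ) 1,
      φ s x ≠ 0) :
    ∃ Ctilde : ℝ, 0 < Ctilde ∧ ∃ δtilde : ℝ, 0 < δtilde ∧
      ∀ x : EuclideanSpace ℝ (Fin n), 1 / δtilde ≤ ‖x‖ →
        ‖φ 1 x - x - V x‖ ≤ Ctilde / ‖x‖ := by
  obtain _ | m := n
  · refine ⟨1, one_pos, 1, one_pos, fun x hx => ?_⟩
    have hx0 : x = 0 := Subsingleton.elim x 0
    rw [hx0] at hx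
    norm_num at hx
  have hopen : IsOpen ({(0 : Esp m)}ᶜ) := isOpen_compl_singleton
  have hdiffat : ∀ y : Esp m, y ≠ 0 → DifferentiableAt ℝ V y := fun y hy =>
    (hV.contDiffAt (hopen.mem_nhds hy)).differentiableAt two_ne_zero
  have hsub : Metric.sphere (0 : Esp m) 1 ⊆ {(0 : Esp m)}ᶜ := by
    intro y hy
    simp only [Metric.mem_sphere, dist_zero_right] at hy
    simp only [Set.mem_compl_iff, Set.mem_singleton_iff]
    intro h
    rw [h] at hy; simp at hy
  have hsphne : (Metric.sphere (0 : Esp m) 1).Nonempty :=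
    NormedSpace.sphere_nonempty.mpr zero_le_one
  have hsphc : IsCompact (Metric.sphere (0 : Esp m) 1) := isCompact_sphere 0 1
  -- unit vector membership
  have hunit : ∀ y : Esp m, y ≠ 0 → (‖y‖⁻¹ • y) ∈ Metric.sphere (0 : Esp m) 1 := by
    intro y hy
    have hny : (0:ℝ) < ‖y‖ := norm_pos_iff.mpr hy
    simp [norm_smul, abs_of_pos (inv_pos.mpr hny), inv_mul_cancel₀ hny.ne']
  -- bound M on ‖V‖
  obtain ⟨aM, haM, hMmax⟩ := hsphc.exists_isMaxOn hsphne
    ((hV.continuousOn.mono hsub).norm)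
  set M := ‖V aM‖ with hMdef
  have hM0 : 0 ≤ M := norm_nonneg _
  have hMb : ∀ y : Esp m, y ≠ 0 → ‖V y‖ ≤ M := by
    intro y hy
    have hny : (0:ℝ) < ‖y‖ := norm_pos_iff.mpr hy
    have := hhom ‖y‖⁻¹ (inv_pos.mpr hny) y hy
    rw [← this]
    exact hMmax (hunit y hy)
  -- bound L on ‖fderiv V‖ on sphere
  obtain ⟨aL, haL, hLmax⟩ := hsphc.exists_isMaxOn hsphne
    (((hV.continuousOn_fderiv_of_isOpen hopen one_le_two).mono hsub).norm)
  set L := ‖fderiv ℝ V aL‖ with hLdef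
  have hL0 : 0 ≤ L := norm_nonneg _
  -- scaling of the derivative
  have hscale : ∀ c : ℝ, 0 < c → ∀ u : Esp m, u ≠ 0 →
      fderiv ℝ V u = c • fderiv ℝ V (c • u) := by
    intro c hc u hu
    have hcu : c • u ≠ 0 := smul_ne_zero hc.ne' hu
    have h1 : HasFDerivAt (fun x : Esp m => c • x) (c • ContinuousLinearMap.id ℝ (Esp m)) u :=
      (hasFDerivAt_id u).const_smul c
    have h2 : HasFDerivAt V (fderiv ℝ V (c • u)) (c • u) := (hdiffat _ hcu).hasFDerivAt
    have h3 : HasFDerivAt (fun x : Esp m => V (c • x))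
        ((fderiv ℝ V (c • u)).comp (c • ContinuousLinearMap.id ℝ (Esp m))) u := h2.comp u h1
    have h4 : (fun x : Esp m => V (c • x)) =ᶠ[nhds u] V := by
      filter_upwards [hopen.mem_nhds hu] with z hz
      exact hhom c hc z hz
    have h5 : HasFDerivAt V
        ((fderiv ℝ V (c • u)).comp (c • ContinuousLinearMap.id ℝ (Esp m))) u :=
      h3.congr_of_eventuallyEq h4.symm
    rw [h5.fderiv]
    ext w
    simp
  have hLb : ∀ y : Esp m, y ≠ 0 → ‖fderiv ℝ V y‖ ≤ L / ‖y‖ := by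
    intro y hy
    have hny : (0:ℝ) < ‖y‖ := norm_pos_iff.mpr hy
    have hu : (‖y‖⁻¹ • y) ≠ 0 := by
      intro h
      have := hunit y hy
      rw [h] at this
      simp at this
    have heq := hscale ‖y‖ hny (‖y‖⁻¹ • y) hu
    rw [smul_smul, mul_inv_cancel₀ hny.ne', one_smul] at heq
    have hnorm : ‖fderiv ℝ V (‖y‖⁻¹ • y)‖ = ‖y‖ * ‖fderiv ℝ V y‖ := by
      rw [heq, norm_smul, Real.norm_of_nonneg hny.le]
    have hle : ‖fderiv ℝ V (‖y‖⁻¹ • y)‖ ≤ L := hLmax (hunit y hy)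
    rw [hnorm] at hle
    rw [div_eq_inv_mul]
    calc ‖fderiv ℝ V y‖ = ‖y‖⁻¹ * (‖y‖ * ‖fderiv ℝ V y‖) := by
          field_simp
      _ ≤ ‖y‖⁻¹ * L := by
          exact mul_le_mul_of_nonneg_left hle (inv_nonneg.mpr hny.le)
      _ = ‖y‖⁻¹ * L := rfl
  -- constants
  refine ⟨2 * L * M + 1, by positivity, 1 / (ρ + 2 * M + 2 * L + 2), by positivity, ?_⟩
  intro x hx
  rw [one_div_one_div] at hx
  have hxρ : ρ ≤ ‖x‖ := by linarith
  have hxpos : (0:ℝ) < ‖x‖ := lt_of_lt_of_le hρ hxρ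
  have hx2M : 2 * M + 2 ≤ ‖x‖ := by linarith
  -- Step A : trajectories stay within M of x
  have hA : ∀ s ∈ Set.Icc (0:ℝ) 1, ‖φ s x - x‖ ≤ M := by
    intro s hs
    have h0 : (0:ℝ) ∈ Set.Icc (0:ℝ) 1 := by constructor <;> norm_num
    have := (convex_Icc (0:ℝ) 1).norm_image_sub_le_of_norm_hasDerivWithin_le
      (f := fun t => φ t x) (f' := fun t => V (φ t x)) (C := M)
      (fun t ht => (hφd x hxρ t ht).hasDerivWithinAt)
      (fun t ht => hMb _ (hφne x hxρ t ht)) h0 hs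
    beta_reduce at this
    rw [hφ0 x hxρ] at this
    calc ‖φ s x - x‖ ≤ M * ‖s - 0‖ := this
      _ ≤ M * 1 := by
          apply mul_le_mul_of_nonneg_left _ hM0
          rw [sub_zero, Real.norm_eq_abs, abs_of_nonneg hs.1]
          exact hs.2
      _ = M := mul_one M
  -- points of the ball around x are nonzero and have fderiv bound
  have hball : ∀ y : Esp m, y ∈ Metric.closedBall x M → ‖x‖ / 2 ≤ ‖y‖ := by
    intro y hy
    rw [Metric.mem_closedBall, dist_eq_norm] at hy
    have : ‖x‖ - ‖y‖ ≤ M := le_trans (norm_sub_norm_le x y) (by rwa [norm_sub_rev])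
    linarith
  have hballne : ∀ y : Esp m, y ∈ Metric.closedBall x M → y ≠ 0 := by
    intro y hy h0
    have := hball y hy
    rw [h0, norm_zero] at this
    linarith
  have hballfd : ∀ y : Esp m, y ∈ Metric.closedBall x M →
      ‖fderiv ℝ V y‖ ≤ 2 * L / ‖x‖ := by
    intro y hy
    refine le_trans (hLb y (hballne y hy)) ?_
    have h1 : ‖x‖ / 2 ≤ ‖y‖ := hball y hy
    have h2 : (0:ℝ) < ‖x‖ / 2 := by positivity
    have h3 : (0:ℝ) < ‖y‖ := lt_of_lt_of_le h2 h1
    calc L / ‖y‖ ≤ L / (‖x‖ / 2) := by gcongr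
      _ = 2 * L / ‖x‖ := by
          rw [div_div_eq_mul_div]
          ring_nf
  -- Step B : V along the trajectory is close to V x
  have hB : ∀ s ∈ Set.Icc (0:ℝ) 1, ‖V (φ s x) - V x‖ ≤ 2 * L / ‖x‖ * M := by
    intro s hs
    have hxmem : x ∈ Metric.closedBall x M := Metric.mem_closedBall_self hM0
    have hymem : φ s x ∈ Metric.closedBall x M := by
      rw [Metric.mem_closedBall, dist_eq_norm]
      exact hA s hs
    have := (convex_closedBall x M).norm_image_sub_le_of_norm_hasFDerivWithin_le
      (f := V) (f' := fun y => fderiv ℝ V y) (C := 2 * L / ‖x‖)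
      (fun y hy => (hdiffat y (hballne y hy)).hasFDerivAt.hasFDerivWithinAt)
      (fun y hy => hballfd y hy) hxmem hymem
    calc ‖V (φ s x) - V x‖ ≤ 2 * L / ‖x‖ * ‖φ s x - x‖ := this
      _ ≤ 2 * L / ‖x‖ * M := by
          apply mul_le_mul_of_nonneg_left (hA s hs)
          positivity
  -- Step C : MVT for g t = φ t x - t • V x
  have hC : ∀ s ∈ Set.Icc (0:ℝ) 1,
      HasDerivWithinAt (fun t : ℝ => φ t x - t • V x)
        (V (φ s x) - V x) (Set.Icc (0:ℝ) 1) s := by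
    intro s hs
    have h1 : HasDerivAt (fun t : ℝ => t • V x) (V x) s := by
      simpa using (hasDerivAt_id s).smul_const (V x)
    exact ((hφd x hxρ s hs).sub h1).hasDerivWithinAt
  have h0 : (0:ℝ) ∈ Set.Icc (0:ℝ) 1 := by constructor <;> norm_num
  have h1 : (1:ℝ) ∈ Set.Icc (0:ℝ) 1 := by constructor <;> norm_num
  have hMVT := (convex_Icc (0:ℝ) 1).norm_image_sub_le_of_norm_hasDerivWithin_le
    (f := fun t : ℝ => φ t x - t • V x) (f' := fun s => V (φ s x) - V x)
    (C := 2 * L / ‖x‖ * M) hC (fun s hs => hB s hs) h0 h1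
  simp only [zero_smul, sub_zero, one_smul, hφ0 x hxρ] at hMVT
  have hfinal : ‖φ 1 x - x - V x‖ ≤ 2 * L / ‖x‖ * M := by
    calc ‖φ 1 x - x - V x‖ = ‖φ 1 x - V x - x‖ := by rw [sub_right_comm]
      _ ≤ 2 * L / ‖x‖ * M * ‖(1:ℝ)‖ := hMVT
      _ = 2 * L / ‖x‖ * M := by norm_num
  calc ‖φ 1 x - x - V x‖ ≤ 2 * L / ‖x‖ * M := hfinal
    _ = 2 * L * M / ‖x‖ := by ring
    _ ≤ (2 * L * M + 1) / ‖x‖ := by gcongr; linarith
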